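/- Let p > 1, σ > 0, C > 0, and let B(y) = ( C − ((p−1)/p) · y²/(2σ) )_+^{1/(p−1)} for y ∈ ℝ, where (·)_+ denotes the positive part. Then σ ∫_ℝ B(y)^p dy = ∫_ℝ y² B(y) dy. In particular, if B has second moment Θ₀, then ∫_ℝ B^p dy = Θ₀/σ. -/

import Mathlib

open MeasureTheory Filter Set

/-- The `p`-logarithm: `ln_p u = (u^(p-1) - 1)/(p-1)` for `p ≠ 1`, and `ln u` for `p = 1`. -/
noncomputable def lnp (p : ℝ) (u : ℝ) : ℝ :=
  if p = 1 then Real.log u else (u ^ (p - 1) - 1) / (p - 1)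

/-- Generalized Fisher information `I_p(f) = (1/2) ∫ f ((ln_p f)')²`. -/
noncomputable def fisherP (p : ℝ) (f : ℝ → ℝ) : ℝ :=
  (1 / 2) * ∫ x : ℝ, f x * (deriv (fun y => lnp p (f y)) x) ^ 2

/-- Rényi entropy of order `p ≠ 1`: `R_p(f) = (1/(1-p)) ln ∫ f^p`. -/
noncomputable def renyi (p : ℝ) (f : ℝ → ℝ) : ℝ :=
  (1 / (1 - p)) * Real.log (∫ x : ℝ, f x ^ p)

/-- `f`, together with all its derivatives, decays faster than any polynomial at infinity. -/
def RapidDecay (f : ℝ → ℝ) : Prop :=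
  ∀ n k : ℕ, Tendsto (fun x => x ^ n * iteratedDeriv k f x) (cocompact ℝ) (nhds 0)

/-- for the Barenblatt profile
`B(y) = (C − ((p−1)/p) y²/(2σ))₊^{1/(p−1)}` one has `σ ∫ B^p = ∫ y² B`; in
particular, if the second moment equals `Θ₀` then `∫ B^p = Θ₀/σ`. -/
lemma maxpow_hasDerivAt {q : ℝ} (hq : 1 < q) (t : ℝ) :
    HasDerivAt (fun s : ℝ => (max s 0) ^ q) (q * (max t 0) ^ (q - 1)) t := by
  rcases lt_trichotomy t 0 with ht | ht | ht
  · have hev : (fun s : ℝ => (max s 0) ^ q) =ᶠ[nhds t] (fun _ => (0:ℝ)) := by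
      filter_upwards [eventually_lt_nhds ht] with s hs
      rw [max_eq_right hs.le, Real.zero_rpow (by linarith)]
    have h2 := (hasDerivAt_const t (0:ℝ)).congr_of_eventuallyEq hev
    simpa [max_eq_right ht.le, Real.zero_rpow (show q - 1 ≠ 0 by linarith)] using h2
  · subst ht
    rw [hasDerivAt_iff_tendsto_slope]
    have hval : q * (max (0:ℝ) 0) ^ (q - 1) = 0 := by
      simp [Real.zero_rpow (show q - 1 ≠ 0 by linarith)]
    rw [hval]
    have hbound : ∀ s : ℝ, ‖slope (fun s : ℝ => (max s 0) ^ q) 0 s‖ ≤ |s| ^ (q - 1) := by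
      intro s
      rcases le_or_gt s 0 with hs | hs
      · rw [slope_def_field, max_eq_right hs, max_self,
          Real.zero_rpow (show q ≠ 0 by linarith)]
        simp only [sub_self, sub_zero, zero_div, norm_zero]
        positivity
      · rw [slope_def_field, max_eq_left hs.le, max_self,
          Real.zero_rpow (show q ≠ 0 by linarith), sub_zero, sub_zero]
        have hd := Real.rpow_sub hs q 1
        rw [Real.rpow_one] at hd
        rw [← hd, Real.norm_eq_abs, abs_of_pos hs, abs_of_nonneg (Real.rpow_nonneg hs.le _)]
    apply squeeze_zero_norm hbound
    have hc : ContinuousAt (fun s : ℝ => |s| ^ (q - 1)) 0 :=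
      ContinuousAt.rpow_const (continuous_abs.continuousAt) (Or.inr (by linarith))
    have := hc.tendsto
    simp only [abs_zero, Real.zero_rpow (show q - 1 ≠ 0 by linarith)] at this
    exact this.mono_left nhdsWithin_le_nhds
  · have hev : (fun s : ℝ => (max s 0) ^ q) =ᶠ[nhds t] (fun s => s ^ q) := by
      filter_upwards [eventually_gt_nhds ht] with s hs
      rw [max_eq_left hs.le]
    have h2 := (Real.hasDerivAt_rpow_const (x := t) (p := q) (Or.inl ht.ne')).congr_of_eventuallyEq hev
    simpa [max_eq_left ht.le] using h2


theorem barenblatt_moment_identity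
    (p σ C : ℝ) (hp : 1 < p) (hσ : 0 < σ) (hC : 0 < C)
    (B : ℝ → ℝ)
    (hB : ∀ y, B y = (max (C - (p - 1) / p * y ^ 2 / (2 * σ)) 0) ^ (1 / (p - 1))) :
    σ * (∫ y : ℝ, B y ^ p) = (∫ y : ℝ, y ^ 2 * B y) ∧
      ∀ Θ₀ : ℝ, (∫ y : ℝ, y ^ 2 * B y) = Θ₀ → (∫ y : ℝ, B y ^ p) = Θ₀ / σ := by
  have hp1 : (0:ℝ) < p - 1 := by linarith
  have hp0 : (0:ℝ) < p := by linarith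
  set k : ℝ := (p - 1) / p / (2 * σ) with hk_def
  have hk : 0 < k := by positivity
  set q : ℝ := p / (p - 1) with hq_def
  have hq : 1 < q := (one_lt_div hp1).mpr (by linarith)
  have hq1 : q - 1 = 1 / (p - 1) := by rw [hq_def]; field_simp; ring
  -- rewrite B
  have hBg : ∀ y, B y = (max (C - k * y ^ 2) 0) ^ (1 / (p - 1)) := by
    intro y
    rw [hB y]
    congr 2
    rw [hk_def]; ring
  have hBp : ∀ y, B y ^ p = (max (C - k * y ^ 2) 0) ^ q := by
    intro y
    rw [hBg y, ← Real.rpow_mul (le_max_right _ _)]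
    congr 1
    rw [hq_def]; field_simp
  have hBc : Continuous B := by
    have : Continuous fun y : ℝ => (max (C - k * y ^ 2) 0) ^ (1 / (p - 1)) := by
      apply Continuous.rpow_const
      · exact (continuous_const.sub (continuous_const.mul (continuous_pow 2))).max
          continuous_const
      · intro x; right; positivity
    exact (funext hBg ▸ this : Continuous B)
  -- the radius
  set R : ℝ := Real.sqrt (C / k) with hR_def
  have hR0 : 0 ≤ R := Real.sqrt_nonneg _
  have hR2 : k * R ^ 2 = C := by
    rw [hR_def, Real.sq_sqrt (by positivity : (0:ℝ) ≤ C / k)]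
    field_simp
  -- vanishing outside
  have hzero : ∀ y : ℝ, y ∉ Ioc (-R) R → B y = 0 := by
    intro y hy
    have hy2 : R ^ 2 ≤ y ^ 2 := by
      rcases not_and_or.mp hy with h | h
      · push_neg at h; nlinarith
      · push_neg at h; nlinarith
    have hneg : C - k * y ^ 2 ≤ 0 := by nlinarith
    rw [hBg y, max_eq_right hneg, Real.zero_rpow (by positivity)]
  -- derivative of v
  have hg : ∀ y : ℝ, HasDerivAt (fun y : ℝ => C - k * y ^ 2) (-(k * (2 * y))) y := by
    intro y
    have h1 : HasDerivAt (fun y : ℝ => y ^ 2) (2 * y) y := by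
      simpa [mul_comm] using hasDerivAt_pow 2 y
    simpa using (h1.const_mul k).const_sub C
  have hv : ∀ y : ℝ, HasDerivAt (fun y : ℝ => σ * (max (C - k * y ^ 2) 0) ^ q)
      (-(y * B y)) y := by
    intro y
    have h := (((maxpow_hasDerivAt hq (C - k * y ^ 2)).comp y (hg y)).const_mul σ)
    have hcoef : σ * q * (k * 2) = 1 := by
      rw [hq_def, hk_def]; field_simp
    have hval : σ * (q * (max (C - k * y ^ 2) 0) ^ (q - 1) * -(k * (2 * y)))
        = -(y * B y) := by
      rw [hBg y, ← hq1]
      linear_combination (-(y * (max (C - k * y ^ 2) 0) ^ (q - 1))) * hcoef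
    rw [← hval]
    exact h
  have hle : -R ≤ R := by linarith
  -- boundary values
  have hbdry : ∀ y : ℝ, y ^ 2 = R ^ 2 → σ * (max (C - k * y ^ 2) 0) ^ q = 0 := by
    intro y hy
    rw [hy, show C - k * R ^ 2 = 0 by linarith, max_self,
      Real.zero_rpow (by positivity), mul_zero]
  -- integration by parts
  have hibp := intervalIntegral.integral_mul_deriv_eq_deriv_mul
    (a := -R) (b := R) (u := fun y : ℝ => y) (u' := fun _ : ℝ => (1:ℝ))
    (v := fun y : ℝ => σ * (max (C - k * y ^ 2) 0) ^ q) (v' := fun y : ℝ => -(y * B y))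
    (fun x _ => hasDerivAt_id x) (fun x _ => hv x)
    intervalIntegrable_const
    (((continuous_id.mul hBc).neg).intervalIntegrable _ _)
  beta_reduce at hibp
  rw [hbdry R rfl, hbdry (-R) (by ring), mul_zero, mul_zero, sub_zero, zero_sub] at hibp
  have hL : (∫ x in (-R)..R, x * -(x * B x)) = -∫ x in (-R)..R, x ^ 2 * B x := by
    rw [← intervalIntegral.integral_neg]
    apply intervalIntegral.integral_congr
    intro x _
    ring
  have hRR : (∫ x in (-R)..R, (1:ℝ) * (σ * (max (C - k * x ^ 2) 0) ^ q))
      = σ * ∫ x in (-R)..R, B x ^ p := by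
    rw [← intervalIntegral.integral_const_mul]
    apply intervalIntegral.integral_congr
    intro x _
    beta_reduce
    rw [hBp x]; ring
  rw [hL, hRR] at hibp
  have key : σ * (∫ y in (-R)..R, B y ^ p) = ∫ y in (-R)..R, y ^ 2 * B y := by
    linarith
  have h1 : (∫ y : ℝ, B y ^ p) = ∫ y in (-R)..R, B y ^ p := by
    rw [intervalIntegral.integral_of_le hle]
    exact (setIntegral_eq_integral_of_forall_compl_eq_zero fun y hy => by
      rw [hzero y hy, Real.zero_rpow (by positivity)]).symm
  have h2 : (∫ y : ℝ, y ^ 2 * B y) = ∫ y in (-R)..R, y ^ 2 * B y := by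
    rw [intervalIntegral.integral_of_le hle]
    exact (setIntegral_eq_integral_of_forall_compl_eq_zero fun y hy => by
      rw [hzero y hy, mul_zero]).symm
  have main : σ * (∫ y : ℝ, B y ^ p) = ∫ y : ℝ, y ^ 2 * B y := by
    rw [h1, h2]; exact key
  refine ⟨main, fun Θ₀ hΘ => ?_⟩
  rw [eq_div_iff hσ.ne']
  rw [← hΘ, ← main]
  ring
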